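/- For any p ∈ [0,1] and any δ ∈ [0, 1/p − 1], the KL-divergence between Bernoulli((1+δ)p) and Bernoulli(p) is at least min{δ, δ²} · p / 4. -/

import Mathlib

noncomputable def klBern (p q : ℝ) : EReal :=
  if (0 < p ∧ q = 0) ∨ (p < 1 ∧ q = 1) then ⊤
  else ((p * Real.log (p / q) + (1 - p) * Real.log ((1 - p) / (1 - q)) : ℝ) : EReal)
lemma log_ge_two_mul_div (x : ℝ) (hx : 0 ≤ x) : 2*x/(2+x) ≤ Real.log (1+x) := by
  have key : MonotoneOn (fun t : ℝ => Real.log (1+t) - 2*t/(2+t)) (Set.Ici 0) := by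
    have hder : ∀ t : ℝ, 0 < t →
        HasDerivAt (fun t : ℝ => Real.log (1+t) - 2*t/(2+t))
          (1/(1+t) - 4/(2+t)^2) t := by
      intro t ht
      have h1 : HasDerivAt (fun t : ℝ => Real.log (1+t)) (1/(1+t)) t := by
        have := ((hasDerivAt_id t).const_add 1).log
          (show (1:ℝ) + id t ≠ 0 by simp only [id]; linarith)
        simpa using this
      have h2 : HasDerivAt (fun t : ℝ => 2*t/(2+t)) (4/(2+t)^2) t := by
        have := ((hasDerivAt_id t).const_mul 2).div ((hasDerivAt_id t).const_add 2)
          (show (2:ℝ) + id t ≠ 0 by simp only [id]; linarith)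
        refine this.congr_deriv ?_
        simp only [id]
        field_simp
        ring
      exact h1.sub h2
    apply monotoneOn_of_deriv_nonneg (convex_Ici 0)
    · apply ContinuousOn.sub
      · apply ContinuousOn.log (by fun_prop)
        intro t ht
        simp only [Set.mem_Ici] at ht; intro h; linarith
      · apply ContinuousOn.div (by fun_prop) (by fun_prop)
        intro t ht
        simp only [Set.mem_Ici] at ht; intro h; linarith
    · intro t ht
      rw [interior_Ici] at ht
      exact (hder t (Set.mem_Ioi.mp ht)).differentiableAt.differentiableWithinAt
    · intro t ht
      rw [interior_Ici] at ht
      have ht' := Set.mem_Ioi.mp ht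
      rw [(hder t ht').deriv]
      rw [sub_nonneg, div_le_div_iff₀ (by positivity) (by linarith)]
      nlinarith
  have := key (Set.mem_Ici.mpr le_rfl) (Set.mem_Ici.mpr hx) hx
  simp at this
  linarith

theorem klBern_one_add_ge (p δ : ℝ) (hp : p ∈ Set.Icc (0:ℝ) 1)
    (hδ : δ ∈ Set.Icc (0:ℝ) (1 / p - 1)) :
    ((min δ (δ ^ 2) * p / 4 : ℝ) : EReal) ≤ klBern ((1 + δ) * p) p := by
  obtain ⟨hp0, hp1⟩ := hp
  obtain ⟨hδ0, hδ1⟩ := hδ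
  rcases eq_or_lt_of_le hp0 with hp0' | hp0'
  · -- p = 0
    rw [← hp0']
    norm_num [klBern]
  rcases eq_or_lt_of_le hp1 with hp1' | hp1'
  · -- p = 1, so δ = 0
    rw [hp1'] at hδ1 ⊢
    norm_num at hδ1
    have hδ' : δ = 0 := le_antisymm hδ1 hδ0
    subst hδ'
    norm_num [klBern]
  -- main case: 0 < p < 1
  have hq1 : (1 + δ) * p ≤ 1 := by
    have h1δ : 1 + δ ≤ 1 / p := by linarith
    calc (1 + δ) * p ≤ (1/p) * p := by
          apply mul_le_mul_of_nonneg_right h1δ hp0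
      _ = 1 := by field_simp
  rw [klBern, if_neg]
  swap
  · push_neg
    constructor
    · intro _; linarith
    · intro _; linarith [hp1'.ne]
  rw [EReal.coe_le_coe_iff]
  have hlog1 : Real.log ((1 + δ) * p / p) = Real.log (1 + δ) := by
    congr 1
    field_simp
  rw [hlog1]
  -- second term bound
  have hA : 0 ≤ 1 - (1 + δ) * p := by linarith
  have hterm2 : -(δ * p) ≤ (1 - (1 + δ) * p) * Real.log ((1 - (1 + δ) * p) / (1 - p)) := by
    rcases eq_or_lt_of_le hA with hA0 | hA0
    · rw [← hA0]
      ring_nf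
      nlinarith
    · have hlog : Real.log ((1 - p) / (1 - (1 + δ) * p)) ≤ (1 - p) / (1 - (1 + δ) * p) - 1 :=
        Real.log_le_sub_one_of_pos (by apply div_pos <;> linarith)
      have heq : Real.log ((1 - (1 + δ) * p) / (1 - p)) =
          -Real.log ((1 - p) / (1 - (1 + δ) * p)) := by
        rw [← Real.log_inv]
        congr 1
        field_simp
      rw [heq]
      have h2 : (1 - (1 + δ) * p) * ((1 - p) / (1 - (1 + δ) * p) - 1) = δ * p := by
        field_simp
        ring
      nlinarith [mul_le_mul_of_nonneg_left hlog hA]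
  -- first term bound
  have hterm1 : (1 + δ) * p * (2 * δ / (2 + δ)) ≤ (1 + δ) * p * Real.log (1 + δ) := by
    apply mul_le_mul_of_nonneg_left (log_ge_two_mul_div δ hδ0)
    nlinarith
  have hmain : min δ (δ ^ 2) * p / 4 ≤ (1 + δ) * p * (2 * δ / (2 + δ)) - δ * p := by
    have h2δ : (0:ℝ) < 2 + δ := by linarith
    have heq : (1 + δ) * p * (2 * δ / (2 + δ)) - δ * p = p * δ ^ 2 / (2 + δ) := by
      field_simp
      ring
    rw [heq]
    rcases le_total δ 1 with h | h
    · rw [min_eq_right (by nlinarith)]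
      rw [div_le_div_iff₀ (by norm_num) h2δ]
      nlinarith [mul_nonneg (mul_nonneg hp0 (sq_nonneg δ)) (by linarith : (0:ℝ) ≤ 2 - δ)]
    · rw [min_eq_left (by nlinarith)]
      rw [div_le_div_iff₀ (by norm_num) h2δ]
      nlinarith [mul_nonneg (mul_nonneg hp0 hδ0) (by linarith : (0:ℝ) ≤ 3 * δ - 2)]
  linarith
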